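/- arXiv:1003.5964 — 2 statements merged into one kernel-verified Lean document; each statement's English description precedes it below -/
import Mathlib

section
/- Let T and T̃ be phylogenetic trees on the same leaf set that differ by a single SPR move of a subtree S, and suppose some edge f* of a reference tree T* is good for T but bad for T̃. Then the edge f of T realizing the partition R(T*,f*) is not contained in the pruned subtree S. -/
open SimpleGraph Finset

variable {V : Type*}

/-- `C` separates `R1` from `R2` in `T`. -/
def Separates (T : SimpleGraph V) (C : Set (Sym2 V)) (R1 R2 : Set V) : Prop :=
  ∀ a ∈ R1, ∀ b ∈ R2, ¬ (T.deleteEdges C).Reachable a b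

/-- Minimum size of an edge cut of `T` separating `R1` from `R2`. -/
noncomputable def cutSize (T : SimpleGraph V) (R1 R2 : Set V) : ℕ :=
  sInf {n | ∃ C : Finset (Sym2 V), (C : Set (Sym2 V)) ⊆ T.edgeSet ∧ C.card = n ∧
    Separates T (C : Set (Sym2 V)) R1 R2}

/-- `C` realizes in `T` the leaf partition of `L` induced by deleting `estar` from `Tstar`. -/
def RealizesCut (Tstar : SimpleGraph V) (estar : Sym2 V) (L : Set V)
    (T : SimpleGraph V) (C : Set (Sym2 V)) : Prop :=
  ∀ a ∈ L, ∀ b ∈ L, ¬ (Tstar.deleteEdges {estar}).Reachable a b →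
    ¬ (T.deleteEdges C).Reachable a b

/-- `cut_{R(Tstar,estar)}(T)`: min number of edges of `T` realizing the partition of the
leaf set `L` induced by the edge `estar` of `Tstar`. -/
noncomputable def cutR (Tstar : SimpleGraph V) (estar : Sym2 V) (L : Set V)
    (T : SimpleGraph V) : ℕ :=
  sInf {n | ∃ C : Finset (Sym2 V), (C : Set (Sym2 V)) ⊆ T.edgeSet ∧ C.card = n ∧
    RealizesCut Tstar estar L T (C : Set (Sym2 V))}

/-- The part of the leaf set `L` on the side of `w` after deleting edge `e` of `T`. -/
def sideOf (T : SimpleGraph V) (L : Set V) (e : Sym2 V) (w : V) : Set V :=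
  {l ∈ L | (T.deleteEdges {e}).Reachable w l}

/-- The (unordered) bipartition of the leaf set `L` induced by edge `e` of `T`. -/
def splitOf (T : SimpleGraph V) (L : Set V) (e : Sym2 V) : Set (Set V) :=
  {S | ∃ w ∈ e, S = sideOf T L e w}

/-- Edge `estar` of `Tstar` is good for `T`: some single edge of `T` realizes the same
leaf bipartition. -/
def GoodEdge (Tstar T : SimpleGraph V) (L : Set V) (estar : Sym2 V) : Prop :=
  ∃ e ∈ T.edgeSet, splitOf T L e = splitOf Tstar L estar

/-- The set of edges of `Tstar` which are bad for `T`. -/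
def BadEdges (Tstar T : SimpleGraph V) (L : Set V) : Set (Sym2 V) :=
  {e ∈ Tstar.edgeSet | ¬ GoodEdge Tstar T L e}

/-- A leaf is a vertex of degree 1. -/
def IsLeaf (T : SimpleGraph V) (v : V) : Prop := (T.neighborSet v).ncard = 1

/-- A phylogenetic tree with leaf set `L`: a tree whose leaves are exactly `L` and whose
internal vertices have degree 3. -/
def IsPhylo (T : SimpleGraph V) (L : Set V) : Prop :=
  T.IsTree ∧ (∀ v, v ∈ L ↔ IsLeaf T v) ∧ ∀ v, v ∉ L → (T.neighborSet v).ncard = 3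

/-- The weighted cut function `A(T) = Σ_{e ∈ E(T*)} α*_e · cut_{R(T*,e)}(T)`. -/
noncomputable def Aval (Tstar : SimpleGraph V) [Fintype Tstar.edgeSet]
    (α : Sym2 V → ℝ) (L : Set V) (T : SimpleGraph V) : ℝ :=
  ∑ e ∈ Tstar.edgeFinset, α e * (cutR Tstar e L T : ℝ)
/-- The result of pruning the subtree hanging (via `v`) off the edge `{u,v}` and regrafting
it on the edge `{x,y}`: remove the edges from `v` to its other neighbors `a, b`, add the
edge `{a,b}` (smoothing `v` away), then subdivide the edge `{x,y}` by `v`. -/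
def sprApply (T : SimpleGraph V) (v a b x y : V) : SimpleGraph V :=
  SimpleGraph.fromEdgeSet
    ((((T.edgeSet \ {s(v,a), s(v,b)}) ∪ {s(a,b)}) \ {s(x,y)}) ∪ {s(v,x), s(v,y)})

/-- Validity of the SPR data: `{u,v}` is an edge of `T`, `a, b` are the other two neighbors
of the attachment vertex `v`, and `{x,y}` is an edge of the tree remaining after pruning the
subtree `S` containing `u` (in particular `x, y` lie outside of `S`). -/
def sprValid (T : SimpleGraph V) (u v a b x y : V) : Prop :=
  T.Adj u v ∧ T.Adj v a ∧ T.Adj v b ∧ a ≠ b ∧ a ≠ u ∧ b ≠ u ∧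
  x ≠ y ∧ x ≠ v ∧ y ≠ v ∧
  (s(x,y) ∈ T.edgeSet ∪ {s(a,b)}) ∧
  ¬ (T.deleteEdges {s(u,v)}).Reachable u x ∧ ¬ (T.deleteEdges {s(u,v)}).Reachable u y

/-- `NS T u v`: the trees obtainable from `T` by pruning the subtree `S` hanging off the
edge `{u,v}` on the side of `u` and regrafting it on some edge of the remaining tree. -/
def NS (T : SimpleGraph V) (u v : V) : Set (SimpleGraph V) :=
  {T' | ∃ a b x y, sprValid T u v a b x y ∧ T' = sprApply T v a b x y}

/-- `T'` is obtained from `T` by a single SPR move. -/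
def SPRStep (T T' : SimpleGraph V) : Prop := ∃ u v, T' ∈ NS T u v


section AuxStmt5

private lemma reach_mono' {G G' : SimpleGraph V}
    (h : ∀ c d : V, G.Adj c d → G'.Reachable c d) {z1 z2 : V}
    (hr : G.Reachable z1 z2) : G'.Reachable z1 z2 := by
  rw [SimpleGraph.reachable_iff_reflTransGen] at hr
  induction hr with
  | refl => exact SimpleGraph.Reachable.refl _
  | tail _ hbc ih => exact ih.trans (h _ _ hbc)

private lemma avoid_edge {G : SimpleGraph V} {z1 z2 p q : V}
    (hr : G.Reachable z1 z2) (hp : ¬ G.Reachable z1 p) :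
    (G.deleteEdges {s(p,q)}).Reachable z1 z2 := by
  classical
  obtain ⟨w⟩ := hr
  by_cases he : s(p,q) ∈ w.edges
  · exact absurd ⟨w.takeUntil p (w.fst_mem_support_of_mem_edges he)⟩ hp
  · exact ⟨w.toDeleteEdges _ (fun e hew => by
      simp only [Set.mem_singleton_iff]
      rintro rfl; exact he hew)⟩

private lemma two_sides {G : SimpleGraph V} {u v z : V}
    (hr : G.Reachable u z) :
    (G.deleteEdges {s(u,v)}).Reachable u z ∨ (G.deleteEdges {s(u,v)}).Reachable v z := by
  rw [SimpleGraph.reachable_iff_reflTransGen] at hr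
  induction hr with
  | refl => exact Or.inl (SimpleGraph.Reachable.refl _)
  | tail _ hbc ih =>
    rename_i b c _
    by_cases he : s(b,c) = s(u,v)
    · rw [Sym2.eq_iff] at he
      rcases he with ⟨rfl, rfl⟩ | ⟨rfl, rfl⟩
      · exact Or.inr (SimpleGraph.Reachable.refl _)
      · exact Or.inl (SimpleGraph.Reachable.refl _)
    · have hadj : (G.deleteEdges {s(u,v)}).Adj b c := by
        rw [SimpleGraph.deleteEdges_adj]
        exact ⟨hbc, by simpa using he⟩
      rcases ih with h | h
      · exact Or.inl (h.trans hadj.reachable)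
      · exact Or.inr (h.trans hadj.reachable)

private lemma del2_le (G : SimpleGraph V) (s t : Set (Sym2 V)) :
    (G.deleteEdges s).deleteEdges t ≤ G.deleteEdges t := by
  intro c d h
  simp only [SimpleGraph.deleteEdges_adj] at h ⊢
  exact ⟨h.1.1, h.2⟩

end AuxStmt5

/-- if `T` and `Ttil` differ by an SPR move of the subtree hanging off `{u,v}`
(on the `u` side), and an edge `fstar` of `Tstar` is good for `T` but bad for `Ttil`, then
any edge `f` of `T` realizing the partition `R(Tstar, fstar)` is not contained in the pruned
subtree `S`. -/
theorem stmt5 [Fintype V] (Tstar T Ttil : SimpleGraph V) (L : Set V)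
    (hTs : IsPhylo Tstar L) (hT : IsPhylo T L) (hTt : IsPhylo Ttil L)
    (u v : V) (hmove : Ttil ∈ NS T u v)
    (fstar : Sym2 V) (hf : fstar ∈ Tstar.edgeSet)
    (hgood : GoodEdge Tstar T L fstar) (hbad : ¬ GoodEdge Tstar Ttil L fstar)
    (f : Sym2 V) (hfT : f ∈ T.edgeSet) (hreal : splitOf T L f = splitOf Tstar L fstar) :
    ¬ ∀ z ∈ f, (T.deleteEdges {s(u,v)}).Reachable u z := by
  classical
  intro hcontra0
  revert hfT hreal hcontra0
  induction f using Sym2.ind with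
  | _ p q =>
  intro hfT hreal hcontra
  obtain ⟨a, b, x, y, hval, rfl⟩ := hmove
  obtain ⟨huv, hva, hvb, hab_ne, hau, hbu, hxy, hxv, hyv, hxyE, hux, huy⟩ := hval
  -- basic membership facts about S (= vertices reachable from u in T minus {u,v})
  have hbrT : ¬ (T.deleteEdges {s(u,v)}).Reachable u v :=
    ((SimpleGraph.isBridge_iff.mp
      ((SimpleGraph.isAcyclic_iff_forall_adj_isBridge.mp hT.1.IsAcyclic) huv)))
  have hadjdel : ∀ c d : V, T.Adj c d → s(c,d) ≠ s(u,v) →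
      (T.deleteEdges {s(u,v)}).Adj c d := by
    intro c d h hne
    rw [SimpleGraph.deleteEdges_adj]
    exact ⟨h, by simpa using hne⟩
  have hSu : (T.deleteEdges {s(u,v)}).Reachable u u := SimpleGraph.Reachable.refl _
  have hSv : ¬ (T.deleteEdges {s(u,v)}).Reachable u v := hbrT
  have hSa : ¬ (T.deleteEdges {s(u,v)}).Reachable u a := by
    intro h
    refine hbrT (h.trans (SimpleGraph.Adj.reachable (hadjdel a v hva.symm ?_)))
    rw [Ne, Sym2.eq_iff]
    rintro (⟨h1, -⟩ | ⟨h1, -⟩)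
    · exact hau h1
    · exact hva.ne' h1
  have hSb : ¬ (T.deleteEdges {s(u,v)}).Reachable u b := by
    intro h
    refine hbrT (h.trans (SimpleGraph.Adj.reachable (hadjdel b v hvb.symm ?_)))
    rw [Ne, Sym2.eq_iff]
    rintro (⟨h1, -⟩ | ⟨h1, -⟩)
    · exact hbu h1
    · exact hvb.ne' h1
  have hSx : ¬ (T.deleteEdges {s(u,v)}).Reachable u x := hux
  have hSy : ¬ (T.deleteEdges {s(u,v)}).Reachable u y := huy
  have hSp : (T.deleteEdges {s(u,v)}).Reachable u p := hcontra p (by simp)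
  have hSq : (T.deleteEdges {s(u,v)}).Reachable u q := hcontra q (by simp)
  have hxu : x ≠ u := by rintro rfl; exact hux (SimpleGraph.Reachable.refl _)
  have hyu : y ≠ u := by rintro rfl; exact huy (SimpleGraph.Reachable.refl _)
  -- f is different from every edge with an endpoint outside S
  have hfne : ∀ c d : V, ¬ (T.deleteEdges {s(u,v)}).Reachable u c → s(p,q) ≠ s(c,d) := by
    intro c d hc h
    rw [Sym2.eq_iff] at h
    rcases h with ⟨h1, -⟩ | ⟨-, h2⟩
    · exact hc (h1 ▸ hSp)
    · exact hc (h2 ▸ hSq)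
  -- an edge with both endpoints in S differs from every edge with an endpoint outside S
  have hedge_ne : ∀ c d e1 e2 : V, ¬ (T.deleteEdges {s(u,v)}).Reachable u e1 →
      ¬ (T.deleteEdges {s(u,v)}).Reachable u e2 →
      (T.deleteEdges {s(u,v)}).Reachable u c → s(c,d) ≠ s(e1,e2) := by
    intro c d e1 e2 h1 h2 hc h
    rw [Sym2.eq_iff] at h
    rcases h with ⟨h3, -⟩ | ⟨h3, -⟩
    · exact h1 (h3 ▸ hc)
    · exact h2 (h3 ▸ hc)
  -- adjacency in the regrafted tree
  have hTtadj : ∀ c d : V, (sprApply T v a b x y).Adj c d ↔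
      (s(c,d) ∈ ((((T.edgeSet \ {s(v,a), s(v,b)}) ∪ {s(a,b)}) \ {s(x,y)}) ∪ {s(v,x), s(v,y)})
        ∧ c ≠ d) := by
    intro c d
    unfold sprApply
    exact SimpleGraph.fromEdgeSet_adj _
  have huvTt : (sprApply T v a b x y).Adj u v := by
    rw [hTtadj]
    refine ⟨Or.inl ⟨Or.inl ⟨(SimpleGraph.mem_edgeSet _).mpr huv, ?_⟩, ?_⟩, huv.ne⟩
    · simp only [Set.mem_insert_iff, Set.mem_singleton_iff, Sym2.eq_iff]
      rintro ((⟨h1, -⟩ | ⟨h1, -⟩) | (⟨h1, -⟩ | ⟨h1, -⟩))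
      · exact huv.ne h1
      · exact hau h1.symm
      · exact huv.ne h1
      · exact hbu h1.symm
    · simp only [Set.mem_singleton_iff, Sym2.eq_iff]
      rintro (⟨h1, -⟩ | ⟨h1, -⟩)
      · exact hxu h1.symm
      · exact hyu h1.symm
  have hbrTt : ¬ ((sprApply T v a b x y).deleteEdges {s(u,v)}).Reachable u v :=
    ((SimpleGraph.isBridge_iff.mp
      ((SimpleGraph.isAcyclic_iff_forall_adj_isBridge.mp hTt.1.IsAcyclic) huvTt)))
  -- the u-side of {u,v} is the same in T and in the regrafted tree
  have M1 : ∀ z, ((sprApply T v a b x y).deleteEdges {s(u,v)}).Reachable u z →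
      (T.deleteEdges {s(u,v)}).Reachable u z := by
    intro z hz
    rw [SimpleGraph.reachable_iff_reflTransGen] at hz
    induction hz with
    | refl => exact hSu
    | tail _ hcd ih =>
      rename_i c d _
      rw [SimpleGraph.deleteEdges_adj, hTtadj] at hcd
      obtain ⟨⟨hmem, hne⟩, hnuv⟩ := hcd
      simp only [Set.mem_union, Set.mem_diff, Set.mem_insert_iff,
        Set.mem_singleton_iff] at hmem
      rcases hmem with (⟨(⟨hTe, -⟩ | hab), -⟩ | hvxy)
      · exact ih.trans (hadjdel c d ((SimpleGraph.mem_edgeSet _).mp hTe)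
          (by simpa using hnuv)).reachable
      · rw [Sym2.eq_iff] at hab
        rcases hab with ⟨h1, -⟩ | ⟨h1, -⟩
        · exact absurd (h1 ▸ ih) hSa
        · exact absurd (h1 ▸ ih) hSb
      · rcases hvxy with h1 | h1 <;> rw [Sym2.eq_iff] at h1
        · rcases h1 with ⟨h1, -⟩ | ⟨h1, -⟩
          · exact absurd (h1 ▸ ih) hSv
          · exact absurd (h1 ▸ ih) hSx
        · rcases h1 with ⟨h1, -⟩ | ⟨h1, -⟩
          · exact absurd (h1 ▸ ih) hSv
          · exact absurd (h1 ▸ ih) hSy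
  have M1' : ∀ z, (T.deleteEdges {s(u,v)}).Reachable u z →
      ((sprApply T v a b x y).deleteEdges {s(u,v)}).Reachable u z := by
    intro z hz
    rw [SimpleGraph.reachable_iff_reflTransGen] at hz
    induction hz with
    | refl => exact SimpleGraph.Reachable.refl _
    | tail huc hcd ih =>
      rename_i c d
      have hSc : (T.deleteEdges {s(u,v)}).Reachable u c :=
        (SimpleGraph.reachable_iff_reflTransGen u c).mpr huc
      have hSd : (T.deleteEdges {s(u,v)}).Reachable u d := hSc.trans hcd.reachable
      rw [SimpleGraph.deleteEdges_adj] at hcd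
      refine ih.trans (SimpleGraph.Adj.reachable ?_)
      rw [SimpleGraph.deleteEdges_adj, hTtadj]
      refine ⟨⟨Or.inl ⟨Or.inl ⟨(SimpleGraph.mem_edgeSet _).mpr hcd.1, ?_⟩, ?_⟩, hcd.1.ne⟩, hcd.2⟩
      · simp only [Set.mem_insert_iff, Set.mem_singleton_iff]
        push_neg
        exact ⟨hedge_ne c d v a hSv hSa hSc, hedge_ne c d v b hSv hSb hSc⟩
      · simp only [Set.mem_singleton_iff]
        exact hedge_ne c d x y hSx hSy hSc
  -- vertices outside S are reachable from v avoiding the edge f, in both trees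
  have step1 : ∀ z, ¬ (T.deleteEdges {s(u,v)}).Reachable u z →
      (T.deleteEdges {s(p,q)}).Reachable v z := by
    intro z hz
    have h1 : (T.deleteEdges {s(u,v)}).Reachable v z := by
      rcases two_sides (hT.1.isConnected.preconnected u z) with h | h
      · exact absurd h hz
      · exact h
    have h2 : ¬ (T.deleteEdges {s(u,v)}).Reachable v p := fun h => hbrT (hSp.trans h.symm)
    exact (avoid_edge h1 h2).mono (by
      rw [SimpleGraph.deleteEdges_deleteEdges]
      intro c d hcd
      simp only [SimpleGraph.deleteEdges_adj, Set.mem_union, Set.mem_singleton_iff] at hcd ⊢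
      exact ⟨hcd.1, fun h => hcd.2 (Or.inr h)⟩)
  have step2 : ∀ z, ¬ (T.deleteEdges {s(u,v)}).Reachable u z →
      ((sprApply T v a b x y).deleteEdges {s(p,q)}).Reachable v z := by
    intro z hz
    have h1 : ((sprApply T v a b x y).deleteEdges {s(u,v)}).Reachable v z := by
      rcases two_sides (hTt.1.isConnected.preconnected u z) with h | h
      · exact absurd (M1 z h) hz
      · exact h
    have h2 : ¬ ((sprApply T v a b x y).deleteEdges {s(u,v)}).Reachable v p :=
      fun h => hbrTt ((M1' p hSp).trans h.symm)
    exact (avoid_edge h1 h2).mono (by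
      rw [SimpleGraph.deleteEdges_deleteEdges]
      intro c d hcd
      simp only [SimpleGraph.deleteEdges_adj, Set.mem_union, Set.mem_singleton_iff] at hcd ⊢
      exact ⟨hcd.1, fun h => hcd.2 (Or.inr h)⟩)
  -- deleting f gives the same reachability relation in both trees
  have key : ∀ z1 z2 : V, (T.deleteEdges {s(p,q)}).Reachable z1 z2 ↔
      ((sprApply T v a b x y).deleteEdges {s(p,q)}).Reachable z1 z2 := by
    intro z1 z2
    constructor
    · refine reach_mono' ?_
      intro c d hcd
      rw [SimpleGraph.deleteEdges_adj] at hcd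
      obtain ⟨hT1, hnpq⟩ := hcd
      by_cases h1 : s(c,d) = s(v,a)
      · rw [Sym2.eq_iff] at h1
        rcases h1 with ⟨rfl, rfl⟩ | ⟨rfl, rfl⟩
        · exact step2 d hSa
        · exact (step2 c hSa).symm
      · by_cases h2 : s(c,d) = s(v,b)
        · rw [Sym2.eq_iff] at h2
          rcases h2 with ⟨rfl, rfl⟩ | ⟨rfl, rfl⟩
          · exact step2 d hSb
          · exact (step2 c hSb).symm
        · by_cases h3 : s(c,d) = s(x,y)
          · rw [Sym2.eq_iff] at h3
            rcases h3 with ⟨rfl, rfl⟩ | ⟨rfl, rfl⟩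
            · exact (step2 c hSx).symm.trans (step2 d hSy)
            · exact (step2 c hSy).symm.trans (step2 d hSx)
          · refine SimpleGraph.Adj.reachable ?_
            rw [SimpleGraph.deleteEdges_adj, hTtadj]
            refine ⟨⟨Or.inl ⟨Or.inl ⟨(SimpleGraph.mem_edgeSet _).mpr hT1, ?_⟩, ?_⟩, hT1.ne⟩, hnpq⟩
            · simp only [Set.mem_insert_iff, Set.mem_singleton_iff]
              push_neg
              exact ⟨h1, h2⟩
            · simpa using h3
    · refine reach_mono' ?_
      intro c d hcd
      rw [SimpleGraph.deleteEdges_adj, hTtadj] at hcd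
      obtain ⟨⟨hmem, hne⟩, hnpq⟩ := hcd
      simp only [Set.mem_union, Set.mem_diff, Set.mem_insert_iff,
        Set.mem_singleton_iff] at hmem
      rcases hmem with (⟨(⟨hTe, -⟩ | hab), -⟩ | hvxy)
      · refine SimpleGraph.Adj.reachable ?_
        rw [SimpleGraph.deleteEdges_adj]
        exact ⟨(SimpleGraph.mem_edgeSet _).mp hTe, hnpq⟩
      · rw [Sym2.eq_iff] at hab
        rcases hab with ⟨rfl, rfl⟩ | ⟨rfl, rfl⟩
        · exact (step1 c hSa).symm.trans (step1 d hSb)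
        · exact (step1 c hSb).symm.trans (step1 d hSa)
      · rcases hvxy with h1 | h1 <;> rw [Sym2.eq_iff] at h1
        · rcases h1 with ⟨rfl, rfl⟩ | ⟨rfl, rfl⟩
          · exact step1 d hSx
          · exact (step1 c hSx).symm
        · rcases h1 with ⟨rfl, rfl⟩ | ⟨rfl, rfl⟩
          · exact step1 d hSy
          · exact (step1 c hSy).symm
  -- conclude: f is an edge of the regrafted tree realizing the same split
  refine hbad ⟨s(p,q), ?_, ?_⟩
  · rw [SimpleGraph.mem_edgeSet, hTtadj]
    refine ⟨Or.inl ⟨Or.inl ⟨hfT, ?_⟩, ?_⟩, ((SimpleGraph.mem_edgeSet _).mp hfT).ne⟩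
    · simp only [Set.mem_insert_iff, Set.mem_singleton_iff]
      push_neg
      exact ⟨hfne v a hSv, hfne v b hSv⟩
    · simpa using hfne x y hSx
  · rw [← hreal]
    have hside : ∀ w, sideOf (sprApply T v a b x y) L s(p,q) w = sideOf T L s(p,q) w := by
      intro w
      unfold sideOf
      ext l
      constructor
      · rintro ⟨h1, h2⟩
        exact ⟨h1, (key w l).mpr h2⟩
      · rintro ⟨h1, h2⟩
        exact ⟨h1, (key w l).mp h2⟩
    unfold splitOf
    ext W
    simp only [Set.mem_setOf_eq, hside]
end

section
/- Let T* be a bad-edge witness setup: suppose f* is an edge of T* in BAD_{T*}(T) closest to the leaves, separating a subtree S* of T* (the smaller side, containing at most half the vertices) from the rest. Then S* contains at least two leaves. -/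
open SimpleGraph Finset

variable {V : Type*}

/-- The vertex set of the component of `w` after deleting edge `e` from `T`. -/
def compSet (T : SimpleGraph V) (e : Sym2 V) (w : V) : Set V :=
  {z | (T.deleteEdges {e}).Reachable w z}

/-- The distance of an edge `e` of `T` to the leaves: the number of vertices in the smaller
of the two components of `T − e`. -/
noncomputable def edgeDist (T : SimpleGraph V) (e : Sym2 V) : ℕ :=
  sInf {n | ∃ w ∈ e, n = (compSet T e w).ncard}


private lemma edge_start_unique {G : SimpleGraph V} {p b x y : V} (Q : G.Walk p b)
    (hQ : Q.IsPath) (hx : s(p,x) ∈ Q.edges) (hy : s(p,y) ∈ Q.edges) : x = y := by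
  cases Q with
  | nil => simp at hx
  | cons h Q' =>
    rw [SimpleGraph.Walk.cons_isPath_iff] at hQ
    rw [SimpleGraph.Walk.edges_cons, List.mem_cons] at hx hy
    rcases hx with hx | hx
    · rcases hy with hy | hy
      · exact Sym2.congr_right.mp (hx.trans hy.symm)
      · exact absurd (SimpleGraph.Walk.fst_mem_support_of_mem_edges Q' hy) hQ.2
    · exact absurd (SimpleGraph.Walk.fst_mem_support_of_mem_edges Q' hx) hQ.2

open SimpleGraph Walk in
/-- If all neighbors of the endpoint of a path lie on the path, in an acyclic graph,
then the endpoint has at most one neighbor. -/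
private lemma endpoint_nbhd [DecidableEq V] {G : SimpleGraph V} (hG : G.IsAcyclic) {v l : V}
    (P : G.Walk v l) (hP : P.IsPath) (hmax : ∀ u, G.Adj l u → u ∈ P.support) :
    ∀ x y, G.Adj l x → G.Adj l y → x = y := by
  have hR : P.reverse.IsPath := (isPath_reverse_iff P).mpr hP
  have key : ∀ u, G.Adj l u → s(l,u) ∈ P.reverse.edges := by
    intro u hadj
    have hu : u ∈ P.reverse.support := by
      rw [Walk.support_reverse, List.mem_reverse]; exact hmax u hadj
    set R1 := P.reverse.takeUntil u hu with hR1def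
    have hR1 : R1.IsPath := hR.takeUntil hu
    have hR1r : R1.reverse.IsPath := (isPath_reverse_iff R1).mpr hR1
    by_contra hne
    have hne' : s(l,u) ∉ R1.reverse.edges := by
      rw [Walk.edges_reverse, List.mem_reverse]
      intro hmem
      exact hne (Walk.edges_takeUntil_subset _ hu hmem)
    have hcyc : (Walk.cons hadj R1.reverse).IsCycle :=
      (Walk.cons_isCycle_iff _ hadj).mpr ⟨hR1r, hne'⟩
    exact hG _ hcyc
  intro x y hx hy
  exact edge_start_unique P.reverse hR (key x hx) (key y hy)

open SimpleGraph Walk in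
private lemma exists_maximal_path {G : SimpleGraph V} [Fintype V] [DecidableEq V] :
    ∀ (n : ℕ) {v l : V} (P : G.Walk v l), P.IsPath → Fintype.card V - P.length ≤ n →
    ∃ (l' : V) (P' : G.Walk v l'), P'.IsPath ∧ (∀ e, e ∈ P.edges → e ∈ P'.edges) ∧
      ∀ u, G.Adj l' u → u ∈ P'.support := by
  intro n
  induction n with
  | zero =>
    intro v l P hP hlen
    exact absurd hP.length_lt (by omega)
  | succ n ih =>
    intro v l P hP hlen
    by_cases hall : ∀ u, G.Adj l u → u ∈ P.support
    · exact ⟨l, P, hP, fun e he => he, hall⟩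
    · push_neg at hall
      obtain ⟨u, hadj, hu⟩ := hall
      have hP2 : (P.concat hadj).IsPath := by
        rw [← isPath_reverse_iff, Walk.reverse_concat, Walk.cons_isPath_iff]
        refine ⟨(isPath_reverse_iff P).mpr hP, ?_⟩
        rw [Walk.support_reverse, List.mem_reverse]; exact hu
      have hlt : (P.concat hadj).length < Fintype.card V := hP2.length_lt
      have hlen2 : Fintype.card V - (P.concat hadj).length ≤ n := by
        rw [Walk.length_concat] at *
        omega
      obtain ⟨l', P', h1, h2, h3⟩ := ih (P.concat hadj) hP2 hlen2
      refine ⟨l', P', h1, ?_, h3⟩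
      intro e he
      apply h2
      rw [Walk.edges_concat, List.concat_eq_append, List.mem_append]
      exact Or.inl he

open SimpleGraph Walk in
/-- Deleting an edge of an acyclic graph disconnects its endpoints. -/
private lemma not_reach_of_tree_edge {G : SimpleGraph V} (hG : G.IsAcyclic) {p q : V}
    (hadj : G.Adj p q) : ¬ (G.deleteEdges {s(p,q)}).Reachable p q := by
  intro h
  obtain ⟨P⟩ := h
  classical
  set w := P.toPath.val with hw
  have hwp : w.IsPath := P.toPath.prop
  have hsub : ∀ e ∈ w.edges, e ∈ G.edgeSet := by
    intro e he
    have := w.edges_subset_edgeSet he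
    rw [SimpleGraph.edgeSet_deleteEdges] at this
    exact this.1
  set w' := w.transfer G hsub with hw'
  have hw'p : w'.IsPath := hwp.transfer hsub
  have hne : s(q,p) ∉ w'.edges := by
    rw [hw', SimpleGraph.Walk.edges_transfer]
    intro hmem
    have := w.edges_subset_edgeSet hmem
    rw [SimpleGraph.edgeSet_deleteEdges] at this
    exact this.2 (by rw [Sym2.eq_swap]; rfl)
  exact hG _ ((SimpleGraph.Walk.cons_isCycle_iff w' hadj.symm).mpr ⟨hw'p, hne⟩)

private lemma leaf_unique_nbr {G : SimpleGraph V} {p r : V}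
    (h1 : (G.neighborSet p).ncard = 1) (hr : G.Adj p r) :
    ∀ z, G.Adj p z → z = r := by
  obtain ⟨a, ha⟩ := Set.ncard_eq_one.mp h1
  intro z hz
  have hz' : z ∈ G.neighborSet p := hz
  have hr' : r ∈ G.neighborSet p := hr
  rw [ha, Set.mem_singleton_iff] at hz' hr'
  rw [hz', hr']

private lemma leaf_deleted_reach {G : SimpleGraph V} {p r z : V}
    (h1 : (G.neighborSet p).ncard = 1) (hr : G.Adj p r)
    (h : (G.deleteEdges {s(p,r)}).Reachable p z) : z = p := by
  obtain ⟨w⟩ := h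
  cases w with
  | nil => rfl
  | cons h' w' =>
    rw [SimpleGraph.deleteEdges_adj] at h'
    have hc := leaf_unique_nbr h1 hr _ h'.1
    exact absurd (by rw [hc]; rfl) h'.2

open SimpleGraph Walk in
private lemma reach_avoid_leaf [DecidableEq V] {G : SimpleGraph V} (hconn : G.Preconnected)
    {p r a b : V} (h1 : (G.neighborSet p).ncard = 1) (hr : G.Adj p r)
    (ha : a ≠ p) (hb : b ≠ p) : (G.deleteEdges {s(p,r)}).Reachable a b := by
  obtain ⟨w0⟩ := hconn a b
  set w := w0.toPath.val with hwdef
  have hwp : w.IsPath := w0.toPath.prop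
  have hps : p ∉ w.support := by
    intro hp
    set w1 := w.takeUntil p hp with hw1
    set w2 := w.dropUntil p hp with hw2
    -- first edge of w2 is incident to p
    have hn2 : ¬ w2.Nil := Walk.not_nil_of_ne (Ne.symm hb)
    obtain ⟨c2, h2, q2, hq2⟩ := Walk.not_nil_iff.mp hn2
    have hc2 : c2 = r := leaf_unique_nbr h1 hr _ h2
    have he2 : s(p, r) ∈ w2.edges := by
      rw [hq2, Walk.edges_cons, ← hc2]
      exact List.mem_cons_self
    -- last edge of w1 is incident to p
    have hn1 : ¬ w1.reverse.Nil := Walk.not_nil_of_ne (Ne.symm ha)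
    obtain ⟨c1, h1', q1, hq1⟩ := Walk.not_nil_iff.mp hn1
    have hc1 : c1 = r := leaf_unique_nbr h1 hr _ h1'
    have he1 : s(p, r) ∈ w1.edges := by
      have hx : s(p, r) ∈ w1.reverse.edges := by
        rw [hq1, Walk.edges_cons, ← hc1]
        exact List.mem_cons_self
      rwa [Walk.edges_reverse, List.mem_reverse] at hx
    have hnd : w.edges.Nodup := hwp.isTrail.edges_nodup
    have hspec : w1.append w2 = w := Walk.take_spec w hp
    rw [← hspec, Walk.edges_append, List.nodup_append] at hnd
    exact hnd.2.2 _ he1 _ he2 rfl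
  have hedge : ∀ e ∈ w.edges, e ∉ ({s(p,r)} : Set (Sym2 V)) := by
    intro e he hmem
    rw [Set.mem_singleton_iff] at hmem
    subst hmem
    exact hps (w.fst_mem_support_of_mem_edges he)
  exact ⟨w.toDeleteEdges _ hedge⟩


private lemma splitOf_leaf_edge [DecidableEq V] {G : SimpleGraph V} (hconn : G.Preconnected)
    {L : Set V} {p r : V} (hpL : p ∈ L) (h1 : (G.neighborSet p).ncard = 1) (hr : G.Adj p r) :
    splitOf G L s(p,r) = {S | S = {p} ∨ S = L \ {p}} := by
  have side1 : sideOf G L s(p,r) p = {p} := by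
    ext l
    constructor
    · rintro ⟨hl, hre⟩
      exact leaf_deleted_reach h1 hr hre
    · intro hl
      rw [Set.mem_singleton_iff] at hl
      subst hl
      exact ⟨hpL, SimpleGraph.Reachable.refl _⟩
  have side2 : sideOf G L s(p,r) r = L \ {p} := by
    ext l
    constructor
    · rintro ⟨hl, hre⟩
      refine ⟨hl, ?_⟩
      intro hlp
      rw [Set.mem_singleton_iff] at hlp
      subst hlp
      exact hr.ne' (leaf_deleted_reach h1 hr hre.symm)
    · rintro ⟨hl, hlp⟩
      rw [Set.mem_singleton_iff] at hlp
      exact ⟨hl, reach_avoid_leaf hconn h1 hr hr.ne' hlp⟩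
  ext S
  simp only [splitOf, Set.mem_setOf_eq, Sym2.mem_iff]
  constructor
  · rintro ⟨w, hw, rfl⟩
    rcases hw with rfl | rfl
    · rw [side1]; exact Or.inl rfl
    · rw [side2]; exact Or.inr rfl
  · rintro (rfl | rfl)
    · exact ⟨p, Or.inl rfl, side1.symm⟩
    · exact ⟨r, Or.inr rfl, side2.symm⟩

/-- if `fstar = s(p,q)` is a bad edge of `Tstar` for `T` closest to the leaves,
with `p` on the smaller side `S*`, then `S*` contains at least two leaves. -/
theorem stmt10 [Fintype V] (Tstar T : SimpleGraph V) (L : Set V)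
    (hTs : IsPhylo Tstar L) (hT : IsPhylo T L)
    (p q : V) (hbad : s(p,q) ∈ BadEdges Tstar T L)
    (hsmall : (compSet Tstar s(p,q) p).ncard ≤ (compSet Tstar s(p,q) q).ncard)
    (hclosest : ∀ g ∈ BadEdges Tstar T L, edgeDist Tstar s(p,q) ≤ edgeDist Tstar g) :
    2 ≤ (L ∩ compSet Tstar s(p,q) p).ncard := by
  classical
  obtain ⟨hbadE, hbadG⟩ := hbad
  have hadj : Tstar.Adj p q := (SimpleGraph.mem_edgeSet _).mp hbadE
  by_cases hpL : p ∈ L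
  · -- `p` is a leaf, so the edge would be good: contradiction.
    exfalso
    apply hbadG
    have h1s : (Tstar.neighborSet p).ncard = 1 := (hTs.2.1 p).mp hpL
    have h1t : (T.neighborSet p).ncard = 1 := (hT.2.1 p).mp hpL
    obtain ⟨rT, hrT⟩ := Set.ncard_eq_one.mp h1t
    have hadjT : T.Adj p rT := by
      have : rT ∈ T.neighborSet p := by rw [hrT]; exact rfl
      exact this
    refine ⟨s(p, rT), (SimpleGraph.mem_edgeSet _).mpr hadjT, ?_⟩
    rw [splitOf_leaf_edge hT.1.isConnected.preconnected hpL h1t hadjT,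
        splitOf_leaf_edge hTs.1.isConnected.preconnected hpL h1s hadj]
  · -- `p` is internal: find two leaves on the `p`-side.
    set G := Tstar.deleteEdges {s(p,q)} with hGdef
    have hle : G ≤ Tstar := SimpleGraph.deleteEdges_le _
    have hGacyc : G.IsAcyclic := by
      intro v c hc
      exact hTs.1.IsAcyclic (c.mapLe hle) (hc.mapLe hle)
    have hdeg : (Tstar.neighborSet p).ncard = 3 := hTs.2.2 p hpL
    have hqmem : q ∈ Tstar.neighborSet p := hadj
    have hcard2 : (Tstar.neighborSet p \ {q}).ncard = 2 := by
      rw [Set.ncard_diff_singleton_of_mem hqmem, hdeg]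
    have hgt1 : 1 < (Tstar.neighborSet p \ {q}).ncard := by omega
    obtain ⟨x, y, hx, hy, hxy⟩ := (Set.one_lt_ncard_iff (Set.toFinite _)).mp hgt1
    obtain ⟨hxadj, hxq⟩ := hx
    obtain ⟨hyadj, hyq⟩ := hy
    rw [Set.mem_singleton_iff] at hxq hyq
    have hGadj : ∀ z, Tstar.Adj p z → z ≠ q → G.Adj p z := by
      intro z hz hzq
      rw [hGdef, SimpleGraph.deleteEdges_adj]
      refine ⟨hz, ?_⟩
      rw [Set.mem_singleton_iff, Sym2.eq_iff]
      push_neg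
      exact ⟨fun _ => hzq, fun h => absurd h hadj.ne⟩
    have hpx : G.Adj p x := hGadj x hxadj hxq
    have hpy : G.Adj p y := hGadj y hyadj hyq
    -- construct maximal paths starting with the edges to x and to y
    have hnoreach : ¬ G.Reachable p q := not_reach_of_tree_edge hTs.1.IsAcyclic hadj
    have key : ∀ z : V, G.Adj p z →
        ∃ l, l ∈ L ∧ l ∈ compSet Tstar s(p,q) p ∧
          ∃ P : G.Walk p l, P.IsPath ∧ s(p,z) ∈ P.edges := by
      intro z hpz
      have hP0 : (SimpleGraph.Walk.cons hpz SimpleGraph.Walk.nil).IsPath := by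
        rw [SimpleGraph.Walk.cons_isPath_iff]
        exact ⟨SimpleGraph.Walk.IsPath.nil, by simp [hpz.ne]⟩
      obtain ⟨l, P, hP, hedg, hmax⟩ :=
        exists_maximal_path (G := G) (Fintype.card V) _ hP0 (Nat.sub_le _ _)
      have hez : s(p, z) ∈ P.edges := hedg _ (by simp)
      have hlp : l ≠ p := by
        intro h
        subst h
        cases P with
        | nil => simp at hez
        | cons h' P' =>
          rw [SimpleGraph.Walk.cons_isPath_iff] at hP
          exact hP.2 (P'.end_mem_support)
      have hreach : G.Reachable p l := ⟨P⟩
      have hlq : l ≠ q := by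
        intro h
        subst h
        exact hnoreach hreach
      -- l has at most one neighbor in G
      have hsub := endpoint_nbhd hGacyc P hP hmax
      -- l has at least one neighbor in G
      have hPnil : ¬ P.Nil := by
        rw [SimpleGraph.Walk.nil_iff_length_eq]
        intro h
        have := SimpleGraph.Walk.length_edges P
        rw [h, List.length_eq_zero_iff] at this
        rw [this] at hez
        simp at hez
      have hRnil : ¬ P.reverse.Nil := by
        rw [SimpleGraph.Walk.nil_iff_length_eq, SimpleGraph.Walk.length_reverse]
        rw [SimpleGraph.Walk.nil_iff_length_eq] at hPnil
        exact hPnil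
      obtain ⟨c, hc, _, _⟩ := SimpleGraph.Walk.not_nil_iff.mp hRnil
      -- neighbors of l in Tstar = neighbors in G
      have hnbr : Tstar.neighborSet l = G.neighborSet l := by
        ext u
        simp only [SimpleGraph.mem_neighborSet, hGdef, SimpleGraph.deleteEdges_adj,
          Set.mem_singleton_iff, Sym2.eq_iff]
        constructor
        · intro h
          refine ⟨h, ?_⟩
          push_neg
          exact ⟨fun h' => absurd h' hlp, fun h' => absurd h' hlq⟩
        · exact fun h => h.1
      have hone : (Tstar.neighborSet l).ncard = 1 := by
        rw [hnbr]
        rw [Set.ncard_eq_one]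
        refine ⟨c, ?_⟩
        ext u
        simp only [SimpleGraph.mem_neighborSet, Set.mem_singleton_iff]
        exact ⟨fun h => hsub u c h hc, fun h => h ▸ hc⟩
      exact ⟨l, (hTs.2.1 l).mpr hone, hreach, P, hP, hez⟩
    obtain ⟨l1, hl1L, hl1C, P1, hP1, he1⟩ := key x hpx
    obtain ⟨l2, hl2L, hl2C, P2, hP2, he2⟩ := key y hpy
    have hl12 : l1 ≠ l2 := by
      intro h
      subst h
      have hPeq : (⟨P1, hP1⟩ : G.Path p l1) = ⟨P2, hP2⟩ :=
        (SimpleGraph.isAcyclic_iff_path_unique.mp hGacyc) _ _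
      have : P1 = P2 := congrArg Subtype.val hPeq
      subst this
      exact hxy (edge_start_unique P1 hP1 he1 he2)
    have hsubset : {l1, l2} ⊆ L ∩ compSet Tstar s(p,q) p := by
      rintro z (rfl | rfl)
      · exact ⟨hl1L, hl1C⟩
      · exact ⟨hl2L, hl2C⟩
    calc 2 = ({l1, l2} : Set V).ncard := (Set.ncard_pair hl12).symm
    _ ≤ (L ∩ compSet Tstar s(p,q) p).ncard := Set.ncard_le_ncard hsubset (Set.toFinite _)
end
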